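/- For even g ≥ 2, in the abelian group G = ⟨r, s, t | 2r = 0, 4t + 2g·s = 0, 2(g+1)t + g(g+1)s = 0⟩, the elements s, t + (g/2)·s, and r give a decomposition G ≅ ℤ·s ⊕ (ℤ/2)·(t + (g/2)s) ⊕ (ℤ/2)·r. -/
import Mathlib


/-- The relation submodule of `ℤ³` (coordinates `(r, s, t)`) generated by
`2r`, `4t + 2g·s` and `2(g+1)·t + g(g+1)·s`. -/
def relSub (g : ℕ) : Submodule ℤ (ℤ × ℤ × ℤ) :=
  Submodule.span ℤ
    {((2 : ℤ), (0 : ℤ), (0 : ℤ)), ((0 : ℤ), (2 * g : ℤ), (4 : ℤ)),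
      ((0 : ℤ), (g * (g + 1) : ℤ), (2 * (g + 1) : ℤ))}

section aux
variable (g k : ℕ)

def psiL (k : ℕ) : (ℤ × ℤ × ℤ) →ₗ[ℤ] ℤ × ZMod 2 × ZMod 2 where
  toFun p := (p.2.1 - k * p.2.2, (p.2.2 : ZMod 2), (p.1 : ZMod 2))
  map_add' p q := by
    simp only [Prod.fst_add, Prod.snd_add, Prod.mk_add_mk, Prod.mk.injEq]
    push_cast; refine ⟨by ring, rfl, rfl⟩
  map_smul' n p := by
    simp only [Prod.smul_def, smul_eq_mul, RingHom.id_apply, Prod.mk.injEq]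
    refine ⟨by push_cast; ring, ?_, ?_⟩ <;> simp [zsmul_eq_mul]

theorem mem1 : ((2 : ℤ), (0 : ℤ), (0 : ℤ)) ∈ relSub g :=
  Submodule.subset_span (by simp)

theorem mem2 (hk : g = 2 * k) : ((0 : ℤ), (g : ℤ), (2 : ℤ)) ∈ relSub g := by
  have h2 : ((0 : ℤ), (2 * g : ℤ), (4 : ℤ)) ∈ relSub g :=
    Submodule.subset_span (by simp)
  have h3 : ((0 : ℤ), (g * (g + 1) : ℤ), (2 * (g + 1) : ℤ)) ∈ relSub g :=
    Submodule.subset_span (by simp)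
  have hgk : (g : ℤ) = 2 * k := by exact_mod_cast hk
  have : ((0 : ℤ), (g : ℤ), (2 : ℤ)) =
      (-(k : ℤ)) • ((0 : ℤ), (2 * g : ℤ), (4 : ℤ)) +
        (1 : ℤ) • ((0 : ℤ), (g * (g + 1) : ℤ), (2 * (g + 1) : ℤ)) := by
    simp only [Prod.smul_mk, smul_eq_mul, Prod.mk_add_mk, Prod.mk.injEq]
    refine ⟨by ring, by rw [hgk]; ring, by rw [hgk]; ring⟩
  rw [this]
  exact Submodule.add_mem _ (Submodule.smul_mem _ _ h2) (Submodule.smul_mem _ _ h3)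

theorem hle_aux (hk : g = 2 * k) : relSub g ≤ LinearMap.ker (psiL k) := by
  have hgk : (g : ℤ) = 2 * k := by exact_mod_cast hk
  have h2 : ((2 : ℤ) : ZMod 2) = 0 := by decide
  have h4 : ((4 : ℤ) : ZMod 2) = 0 := by decide
  rw [relSub, Submodule.span_le]
  rintro v hv
  simp only [Set.mem_insert_iff, Set.mem_singleton_iff] at hv
  have key : ∀ x y z : ℤ, y - (k : ℤ) * z = 0 → ((z : ZMod 2) = 0) → ((x : ZMod 2) = 0) →
      (x, y, z) ∈ LinearMap.ker (psiL k) := by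
    intro x y z h1 hz hx
    simp only [LinearMap.mem_ker, psiL, LinearMap.coe_mk, AddHom.coe_mk, h1, hz, hx]
    rfl
  rcases hv with rfl | rfl | rfl
  · exact key 2 0 0 (by ring) (by decide) h2
  · exact key 0 (2 * g) 4 (by rw [hgk]; ring) h4 (by decide)
  · refine key 0 (g * (g + 1)) (2 * (g + 1)) (by rw [hgk]; ring) ?_ (by decide)
    rw [Int.cast_mul, h2, zero_mul]

end aux


/-- For even `g = 2k ≥ 2`, the classes of `s`, `t + (g/2)·s` and `r` give an
explicit decomposition `G ≅ ℤ ⊕ ℤ/2 ⊕ ℤ/2`. -/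
theorem abelianization_iso_even (g k : ℕ) (hg : 2 ≤ g) (hk : g = 2 * k) :
    ∃ f : ℤ × ZMod 2 × ZMod 2 ≃+ ((ℤ × ℤ × ℤ) ⧸ relSub g),
      f (1, 0, 0) = Submodule.Quotient.mk ((0 : ℤ), (1 : ℤ), (0 : ℤ)) ∧
      f (0, 1, 0) = Submodule.Quotient.mk ((0 : ℤ), (k : ℤ), (1 : ℤ)) ∧
      f (0, 0, 1) = Submodule.Quotient.mk ((1 : ℤ), (0 : ℤ), (0 : ℤ)) := by
  classical
  set Q := (ℤ × ℤ × ℤ) ⧸ relSub g with hQ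
  have hgk : (g : ℤ) = 2 * k := by exact_mod_cast hk
  let ψ : Q →ₗ[ℤ] ℤ × ZMod 2 × ZMod 2 := Submodule.liftQ (relSub g) (psiL k) (hle_aux g k hk)
  have hψmk : ∀ v : ℤ × ℤ × ℤ,
      ψ (Submodule.Quotient.mk v) = (v.2.1 - k * v.2.2, (v.2.2 : ZMod 2), (v.1 : ZMod 2)) :=
    fun v => rfl
  let qs : Q := Submodule.Quotient.mk ((0 : ℤ), (1 : ℤ), (0 : ℤ))
  let qt : Q := Submodule.Quotient.mk ((0 : ℤ), (k : ℤ), (1 : ℤ))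
  let qr : Q := Submodule.Quotient.mk ((1 : ℤ), (0 : ℤ), (0 : ℤ))
  have hqt2 : (zmultiplesHom Q qt) ((2 : ℕ) : ℤ) = 0 := by
    simp only [zmultiplesHom_apply, Nat.cast_ofNat]
    rw [← Submodule.Quotient.mk_smul, Submodule.Quotient.mk_eq_zero]
    have := mem2 g k hk
    convert this using 2 <;> simp [hgk] <;> ring
  have hqr2 : (zmultiplesHom Q qr) ((2 : ℕ) : ℤ) = 0 := by
    simp only [zmultiplesHom_apply, Nat.cast_ofNat]
    rw [← Submodule.Quotient.mk_smul, Submodule.Quotient.mk_eq_zero]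
    have := mem1 g
    convert this using 2 <;> simp
  let f2 : ZMod 2 →+ Q := ZMod.lift 2 ⟨zmultiplesHom Q qt, hqt2⟩
  let f3 : ZMod 2 →+ Q := ZMod.lift 2 ⟨zmultiplesHom Q qr, hqr2⟩
  let φ : ℤ × ZMod 2 × ZMod 2 →+ Q :=
    (zmultiplesHom Q qs).coprod (f2.coprod f3)
  have hφ : ∀ (n : ℤ) (a b : ZMod 2), φ (n, a, b) = n • qs + f2 a + f3 b := by
    intro n a b
    simp [φ, AddMonoidHom.coprod_apply, add_assoc]
  have hf2 : ∀ m : ℤ, f2 ((m : ℤ) : ZMod 2) = m • qt := fun m => ZMod.lift_coe 2 _ m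
  have hf3 : ∀ m : ℤ, f3 ((m : ℤ) : ZMod 2) = m • qr := fun m => ZMod.lift_coe 2 _ m
  have left_inv : ∀ x : ℤ × ZMod 2 × ZMod 2, ψ (φ x) = x := by
    rintro ⟨n, a, b⟩
    obtain ⟨a', rfl⟩ := ZMod.intCast_surjective a
    obtain ⟨b', rfl⟩ := ZMod.intCast_surjective b
    rw [hφ, hf2, hf3]
    simp only [map_add, map_zsmul]
    rw [show ψ qs = (1, 0, 0) from by rw [hψmk]; norm_num,
        show ψ qt = (0, 1, 0) from by rw [hψmk]; norm_num,
        show ψ qr = (0, 0, 1) from by rw [hψmk]; norm_num]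
    refine Prod.ext ?_ (Prod.ext ?_ ?_) <;> simp [Prod.smul_def]
  have right_inv : ∀ q : Q, φ (ψ q) = q := by
    intro q
    obtain ⟨⟨x, y, z⟩, rfl⟩ := Submodule.Quotient.mk_surjective _ q
    rw [hψmk, hφ, hf2, hf3]
    show (y - (k : ℤ) * z) • ((relSub g).mkQ ((0 : ℤ), (1 : ℤ), (0 : ℤ))) +
        z • ((relSub g).mkQ ((0 : ℤ), (k : ℤ), (1 : ℤ))) +
        x • ((relSub g).mkQ ((1 : ℤ), (0 : ℤ), (0 : ℤ))) = (relSub g).mkQ (x, y, z)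
    rw [← map_smul, ← map_smul, ← map_smul, ← map_add, ← map_add]
    congr 1
    refine Prod.ext ?_ (Prod.ext ?_ ?_) <;> simp [Prod.smul_def] <;> ring
  refine ⟨AddEquiv.mk ⟨φ, fun q => ψ q, left_inv, right_inv⟩ (map_add φ), ?_, ?_, ?_⟩
  · show φ (1, 0, 0) = qs
    rw [hφ]; simp [f2, f3]
  · show φ (0, 1, 0) = qt
    rw [hφ, show (1 : ZMod 2) = ((1 : ℤ) : ZMod 2) from by decide, hf2]
    simp [f3]
  · show φ (0, 0, 1) = qr
    rw [hφ, show (1 : ZMod 2) = ((1 : ℤ) : ZMod 2) from by decide, hf3]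
    simp [f2]
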